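/- Let q be a prime power, m a positive integer, and n = q^m − 1. For an integer δ with 2 ≤ δ ≤ q^{⌈m/2⌉} + 1, the union Z = C_1 ∪ C_2 ∪ ⋯ ∪ C_{δ−1} of the q-ary cyclotomic cosets modulo n of 1, 2, …, δ−1 has cardinality |Z| = m·⌈(δ−1)(1 − 1/q)⌉. -/

import Mathlib

/-- The `q`-ary cyclotomic coset of `x` modulo `n`: `{x q^k mod n : k ≥ 0}`. -/
def cycCoset (q n x : ℕ) : Set ℕ := {y | ∃ k : ℕ, y = x * q ^ k % n}

section aux

lemma qpow_modeq {q m : ℕ} (hq : 2 ≤ q) (hm : 0 < m) : q ^ m ≡ 1 [MOD q ^ m - 1] := by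
  have h1 : 1 ≤ q ^ m := Nat.one_le_pow _ _ (by omega)
  exact ((Nat.modEq_iff_dvd' h1).mpr dvd_rfl).symm

lemma mod_cycle {q m : ℕ} (hq : 2 ≤ q) (hm : 0 < m) (x k : ℕ) :
    x * q ^ k ≡ x * q ^ (k % m) [MOD q ^ m - 1] := by
  have e : x * q ^ k = x * q ^ (k % m) * (q ^ m) ^ (k / m) := by
    rw [mul_assoc, ← pow_mul, ← pow_add, Nat.mod_add_div]
  calc x * q ^ k = x * q ^ (k % m) * (q ^ m) ^ (k / m) := e
    _ ≡ x * q ^ (k % m) * 1 ^ (k / m) [MOD q ^ m - 1] :=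
        Nat.ModEq.mul_left _ ((qpow_modeq hq hm).pow (k / m))
    _ = x * q ^ (k % m) := by rw [one_pow, mul_one]

/-- Key arithmetic lemma. -/
lemma key_lemma {q m : ℕ} (hq : 2 ≤ q) (x y k : ℕ)
    (hx1 : 1 ≤ x) (hx2 : x < q ^ ((m + 1) / 2)) (hxq : ¬ q ∣ x)
    (hy1 : 1 ≤ y) (hy2 : y < q ^ ((m + 1) / 2)) (hyq : ¬ q ∣ y)
    (hk : k < m) (h : x * q ^ k ≡ y [MOD q ^ m - 1]) : k = 0 ∧ x = y := by
  set s := (m + 1) / 2 with hs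
  have hm : 1 ≤ m := by omega
  have hs1 : 1 ≤ s := by omega
  have h2s : 2 * s ≤ m + 1 := by omega
  have hsm : s ≤ m := by omega
  have hqm2 : 2 ≤ q ^ m := le_trans hq (Nat.le_self_pow (by omega) q)
  have hxn : x ≤ q ^ m - 1 := by
    have : q ^ s ≤ q ^ m := Nat.pow_le_pow_right (by omega) hsm
    omega
  have hyn : y ≤ q ^ m - 1 := by
    have : q ^ s ≤ q ^ m := Nat.pow_le_pow_right (by omega) hsm
    omega
  rcases Nat.eq_zero_or_pos k with rfl | hk1
  · refine ⟨rfl, ?_⟩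
    have h' : x % (q ^ m - 1) = y % (q ^ m - 1) := by simpa [Nat.ModEq] using h
    rcases Nat.lt_or_ge x (q ^ m - 1) with hx | hx
    · rcases Nat.lt_or_ge y (q ^ m - 1) with hy | hy
      · rw [Nat.mod_eq_of_lt hx, Nat.mod_eq_of_lt hy] at h'; exact h'
      · have hyeq : y = q ^ m - 1 := by omega
        rw [Nat.mod_eq_of_lt hx, hyeq, Nat.mod_self] at h'; omega
    · have hxeq : x = q ^ m - 1 := by omega
      rcases Nat.lt_or_ge y (q ^ m - 1) with hy | hy
      · rw [hxeq, Nat.mod_self, Nat.mod_eq_of_lt hy] at h'; omega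
      · omega
  · exfalso
    rcases le_or_gt k (m - s) with hcase | hcase
    · -- x * q^k < n, so y = x * q^k and q ∣ y
      have b1 : x * q ^ k ≤ (q ^ s - 1) * q ^ (m - s) :=
        Nat.mul_le_mul (by omega) (Nat.pow_le_pow_right (by omega) hcase)
      have b2 : (q ^ s - 1) * q ^ (m - s) = q ^ m - q ^ (m - s) := by
        rw [Nat.sub_mul, one_mul, ← pow_add]
        congr 2
        omega
      have b3 : 2 ≤ q ^ (m - s) := le_trans hq (Nat.le_self_pow (by omega) q)
      have hlt : x * q ^ k < q ^ m - 1 := by omega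
      have h' : y % (q ^ m - 1) = x * q ^ k := by
        have := (h.symm : y ≡ x * q ^ k [MOD q ^ m - 1])
        rw [Nat.ModEq] at this
        rw [this, Nat.mod_eq_of_lt hlt]
      have hpos : 1 ≤ x * q ^ k := Nat.one_le_iff_ne_zero.mpr (by positivity)
      have hy' : y = x * q ^ k := by
        rcases Nat.lt_or_ge y (q ^ m - 1) with hy | hy
        · rw [Nat.mod_eq_of_lt hy] at h'; exact h'
        · have : y = q ^ m - 1 := by omega
          rw [this, Nat.mod_self] at h'; omega
      obtain ⟨k', rfl⟩ : ∃ k', k = k' + 1 := ⟨k - 1, by omega⟩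
      exact hyq ⟨x * q ^ k', by rw [hy', pow_succ]; ring⟩
    · -- k > m - s : use y * q^(m-k) ≡ x
      set j := m - k with hj
      have hj1 : 1 ≤ j := by omega
      have hj2 : j + 1 ≤ s := by omega
      have hs2 : 2 ≤ s := by omega
      have h2 : y * q ^ j ≡ x [MOD q ^ m - 1] := by
        have hmul := h.mul_right (q ^ j)
        have e1 : x * q ^ k * q ^ j = x * q ^ m := by
          rw [mul_assoc, ← pow_add]
          congr 2
          omega
        rw [e1] at hmul
        have e2 : x * q ^ m ≡ x [MOD q ^ m - 1] := by
          calc x * q ^ m ≡ x * 1 [MOD q ^ m - 1] := Nat.ModEq.mul_left _ (qpow_modeq hq hm)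
            _ = x := mul_one x
        exact (e2.symm.trans hmul).symm
      have b1 : y * q ^ j ≤ (q ^ s - 1) * q ^ (s - 1) :=
        Nat.mul_le_mul (by omega) (Nat.pow_le_pow_right (by omega) (by omega))
      have b2 : (q ^ s - 1) * q ^ (s - 1) = q ^ (2 * s - 1) - q ^ (s - 1) := by
        rw [Nat.sub_mul, one_mul, ← pow_add]
        congr 2
        omega
      have b3 : q ^ (2 * s - 1) ≤ q ^ m := Nat.pow_le_pow_right (by omega) (by omega)
      have b4 : 2 ≤ q ^ (s - 1) := le_trans hq (Nat.le_self_pow (by omega) q)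
      have hlt : y * q ^ j < q ^ m - 1 := by omega
      have h' : x % (q ^ m - 1) = y * q ^ j := by
        have := (h2.symm : x ≡ y * q ^ j [MOD q ^ m - 1])
        rw [Nat.ModEq] at this
        rw [this, Nat.mod_eq_of_lt hlt]
      have hx' : x = y * q ^ j := by
        have hpos : 1 ≤ y * q ^ j := Nat.one_le_iff_ne_zero.mpr (by positivity)
        rcases Nat.lt_or_ge x (q ^ m - 1) with hx | hx
        · rw [Nat.mod_eq_of_lt hx] at h'; exact h'
        · have : x = q ^ m - 1 := by omega
          rw [this, Nat.mod_self] at h'; omega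
      obtain ⟨j', hj'⟩ : ∃ j', j = j' + 1 := ⟨j - 1, by omega⟩
      exact hxq ⟨y * q ^ j', by rw [hx', hj', pow_succ]; ring⟩

lemma cycCoset_eq_image {q m : ℕ} (hq : 2 ≤ q) (hm : 0 < m) (x : ℕ) :
    cycCoset q (q ^ m - 1) x =
      ↑((Finset.range m).image fun k => x * q ^ k % (q ^ m - 1)) := by
  ext y
  simp only [cycCoset, Set.mem_setOf_eq, Finset.coe_image, Finset.coe_range, Set.mem_image,
    Set.mem_Iio]
  constructor
  · rintro ⟨k, rfl⟩
    exact ⟨k % m, Nat.mod_lt _ hm, (mod_cycle hq hm x k).symm⟩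
  · rintro ⟨k, _, rfl⟩
    exact ⟨k, rfl⟩

lemma cycCoset_q_mul {q m : ℕ} (hq : 2 ≤ q) (hm : 0 < m) (x : ℕ) :
    cycCoset q (q ^ m - 1) (q * x) = cycCoset q (q ^ m - 1) x := by
  obtain ⟨a, rfl⟩ : ∃ a, m = a + 1 := ⟨m - 1, by omega⟩
  ext y
  simp only [cycCoset, Set.mem_setOf_eq]
  constructor
  · rintro ⟨k, rfl⟩
    exact ⟨k + 1, by rw [pow_succ]; ring_nf⟩
  · rintro ⟨k, rfl⟩
    refine ⟨a + k, ?_⟩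
    have e : q * x * q ^ (a + k) = x * q ^ k * q ^ (a + 1) := by ring
    have h2 : x * q ^ k * q ^ (a + 1) ≡ x * q ^ k * 1 [MOD q ^ (a + 1) - 1] :=
      Nat.ModEq.mul_left _ (qpow_modeq hq (by omega))
    have : q * x * q ^ (a + k) ≡ x * q ^ k [MOD q ^ (a + 1) - 1] := by
      rw [e]; simpa using h2
    exact this.symm

lemma exists_rep {q m : ℕ} (hq : 2 ≤ q) (hm : 0 < m) (N : ℕ) :
    ∀ x, 1 ≤ x → x ≤ N → ∃ x', 1 ≤ x' ∧ x' ≤ N ∧ ¬ q ∣ x' ∧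
      cycCoset q (q ^ m - 1) x = cycCoset q (q ^ m - 1) x' := by
  intro x
  induction x using Nat.strong_induction_on with
  | _ x ih =>
    intro h1 h2
    by_cases hd : q ∣ x
    · obtain ⟨x', rfl⟩ := hd
      have hx'1 : 1 ≤ x' := by
        rcases Nat.eq_zero_or_pos x' with rfl | h; · simp at h1
        exact h
      have hlt : x' < q * x' := by
        calc x' = 1 * x' := (one_mul x').symm
          _ < q * x' := by
            apply Nat.mul_lt_mul_of_lt_of_le (by omega) le_rfl (by omega)
      obtain ⟨x'', e1, e2, e3, e4⟩ := ih x' hlt hx'1 (le_trans (le_of_lt hlt) h2)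
      exact ⟨x'', e1, e2, e3, (cycCoset_q_mul hq hm x').trans e4⟩
    · exact ⟨x, h1, h2, hd, rfl⟩

end aux

/-- For `n = q^m - 1` and `2 ≤ δ ≤ q^⌈m/2⌉ + 1`, the union
`Z = C_1 ∪ ⋯ ∪ C_{δ-1}` of `q`-ary cyclotomic cosets has cardinality
`m·⌈(δ-1)(1-1/q)⌉`, where `⌈(δ-1)(1-1/q)⌉ = (δ-1) - ⌊(δ-1)/q⌋`. -/
theorem card_union_cycCosets
    (q m : ℕ) (hq : IsPrimePow q) (hm : 0 < m)
    (δ : ℕ) (hδ1 : 2 ≤ δ) (hδ2 : δ ≤ q ^ ((m + 1) / 2) + 1) :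
    (⋃ x ∈ Set.Icc 1 (δ - 1), cycCoset q (q ^ m - 1) x).ncard =
      m * ((δ - 1) - (δ - 1) / q) := by
  have hq2 : 2 ≤ q := hq.two_le
  have hs1 : 1 ≤ (m + 1) / 2 := by omega
  have hNs : δ - 1 ≤ q ^ ((m + 1) / 2) := by omega
  set N := δ - 1 with hN
  set R : Finset ℕ := (Finset.Icc 1 N).filter (fun x => ¬ q ∣ x) with hRdef
  have hmemR : ∀ x ∈ R, 1 ≤ x ∧ x < q ^ ((m + 1) / 2) ∧ ¬ q ∣ x := by
    intro x hx
    rw [hRdef, Finset.mem_filter, Finset.mem_Icc] at hx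
    obtain ⟨⟨h1, h2⟩, h3⟩ := hx
    refine ⟨h1, ?_, h3⟩
    have hne : x ≠ q ^ ((m + 1) / 2) := by
      intro he
      exact h3 (he ▸ dvd_pow_self q (by omega))
    omega
  -- Step A: reduce union to union over R
  have hU : (⋃ x ∈ Set.Icc 1 N, cycCoset q (q ^ m - 1) x) =
      ⋃ x ∈ (R : Set ℕ), cycCoset q (q ^ m - 1) x := by
    apply Set.Subset.antisymm
    · intro y hy
      simp only [Set.mem_iUnion, Set.mem_Icc, exists_prop] at hy
      obtain ⟨x, ⟨h1, h2⟩, hyx⟩ := hy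
      obtain ⟨x', e1, e2, e3, e4⟩ := exists_rep hq2 hm N x h1 h2
      simp only [Set.mem_iUnion, exists_prop]
      refine ⟨x', ?_, e4 ▸ hyx⟩
      rw [hRdef]
      simp only [Finset.coe_filter, Set.mem_setOf_eq, Finset.mem_Icc]
      exact ⟨⟨e1, e2⟩, e3⟩
    · apply Set.iUnion₂_mono'
      intro x hx
      refine ⟨x, ?_, subset_rfl⟩
      rw [hRdef] at hx
      simp only [Finset.coe_filter, Set.mem_setOf_eq, Finset.mem_Icc] at hx
      exact Set.mem_Icc.mpr hx.1
  rw [hU]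
  -- Step B: as a Finset
  have hU2 : (⋃ x ∈ (R : Set ℕ), cycCoset q (q ^ m - 1) x) =
      ↑(R.biUnion fun x => (Finset.range m).image fun k => x * q ^ k % (q ^ m - 1)) := by
    rw [Finset.coe_biUnion]
    apply Set.iUnion₂_congr
    intro x _
    exact cycCoset_eq_image hq2 hm x
  rw [hU2, Set.ncard_coe_finset]
  -- disjointness
  have hkey : ∀ x ∈ R, ∀ y ∈ R, ∀ i < m, ∀ j < m,
      x * q ^ i % (q ^ m - 1) = y * q ^ j % (q ^ m - 1) →
      (i + (m - j)) % m = 0 ∧ x = y := by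
    intro x hx y hy i hi j hj he
    obtain ⟨hx1, hx2, hx3⟩ := hmemR x hx
    obtain ⟨hy1, hy2, hy3⟩ := hmemR y hy
    have h1 : x * q ^ i ≡ y * q ^ j [MOD q ^ m - 1] := he
    have h2 := h1.mul_right (q ^ (m - j))
    have e1 : y * q ^ j * q ^ (m - j) = y * q ^ m := by
      rw [mul_assoc, ← pow_add]
      congr 2
      omega
    have e2 : x * q ^ i * q ^ (m - j) = x * q ^ (i + (m - j)) := by
      rw [mul_assoc, ← pow_add]
    rw [e1, e2] at h2
    have e3 : y * q ^ m ≡ y [MOD q ^ m - 1] := by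
      calc y * q ^ m ≡ y * 1 [MOD q ^ m - 1] := Nat.ModEq.mul_left _ (qpow_modeq hq2 hm)
        _ = y := mul_one y
    have h3 : x * q ^ ((i + (m - j)) % m) ≡ y [MOD q ^ m - 1] :=
      ((mod_cycle hq2 hm x (i + (m - j))).symm.trans h2).trans e3
    exact key_lemma hq2 x y _ hx1 hx2 hx3 hy1 hy2 hy3 (Nat.mod_lt _ hm) h3
  have hdisj : ∀ x ∈ R, ∀ y ∈ R, x ≠ y →
      Disjoint ((Finset.range m).image fun k => x * q ^ k % (q ^ m - 1))
        ((Finset.range m).image fun k => y * q ^ k % (q ^ m - 1)) := by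
    intro x hx y hy hxy
    rw [Finset.disjoint_left]
    intro a hax hay
    simp only [Finset.mem_image, Finset.mem_range] at hax hay
    obtain ⟨i, hi, rfl⟩ := hax
    obtain ⟨j, hj, he⟩ := hay
    exact hxy ((hkey x hx y hy i hi j hj he.symm).2)
  rw [Finset.card_biUnion hdisj]
  have hcard : ∀ x ∈ R, ((Finset.range m).image fun k => x * q ^ k % (q ^ m - 1)).card = m := by
    intro x hx
    rw [Finset.card_image_of_injOn, Finset.card_range]
    intro i hi j hj he
    simp only [Finset.coe_range, Set.mem_Iio] at hi hj
    have h1 := (hkey x hx x hx i hi j hj he).1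
    have h2 := (hkey x hx x hx j hj i hi he.symm).1
    -- (i + (m - j)) % m = 0 and (j + (m - i)) % m = 0
    rcases Nat.lt_trichotomy i j with h | h | h
    · exfalso
      have : (i + (m - j)) % m = i + (m - j) := Nat.mod_eq_of_lt (by omega)
      omega
    · exact h
    · exfalso
      have : (j + (m - i)) % m = j + (m - i) := Nat.mod_eq_of_lt (by omega)
      omega
  rw [Finset.sum_congr rfl hcard, Finset.sum_const, smul_eq_mul]
  -- Step E: card of R
  have hRcard : R.card = N - N / q := by
    have h1 : ((Finset.Icc 1 N).filter (fun x => q ∣ x)).card = N / q := by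
      have : Finset.Icc 1 N = Finset.Ioc 0 N := by
        ext a
        simp [Finset.mem_Icc, Finset.mem_Ioc]
        omega
      rw [this]
      exact Nat.Ioc_filter_dvd_card_eq_div N q
    have h2 := Finset.card_filter_add_card_filter_not
      (s := Finset.Icc 1 N) (p := fun x => q ∣ x)
    have h3 : (Finset.Icc 1 N).card = N := by
      rw [Nat.card_Icc]
      omega
    rw [hRdef]
    omega
  rw [hRcard, mul_comm]
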